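/- For every phase observable E, every nonempty finite set {n₁,…,n_k} ⊆ ℕ, and every Borel X ⊆ [0,2π) with O ≠ E(X) ≠ I: if a unit vector φ satisfies ∑_{i=1}^k |⟨n_i|φ⟩|² = 1, and in addition X has Lebesgue measure strictly between 0 and 2π, then 0 < ⟨φ|E(X)φ⟩ < 1. -/

import Mathlib

open MeasureTheory Complex ComplexConjugate

/-- `phaseInt X n m = (1/2π) ∫_X e^{i(n-m)x} dx`. -/
noncomputable def phaseInt (X : Set ℝ) (n m : ℕ) : ℂ :=
  ((1 / (2 * Real.pi) : ℝ) : ℂ) *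
    ∫ x in X, Complex.exp (Complex.I * ((n : ℂ) - (m : ℂ)) * (x : ℂ))

private lemma expIntZero (k : ℤ) (hk : k ≠ 0) :
    (∫ x in Set.Ico (0:ℝ) (2*Real.pi), Complex.exp (Complex.I * (k:ℂ) * (x:ℂ))) = 0 := by
  have h2 : (0:ℝ) ≤ 2*Real.pi := by positivity
  rw [MeasureTheory.restrict_Ico_eq_restrict_Ioc,
    ← intervalIntegral.integral_of_le h2]
  have hc : Complex.I * (k:ℂ) ≠ 0 := by
    simp [Complex.I_ne_zero, hk]
  have := integral_exp_mul_complex (a := (0:ℝ)) (b := 2*Real.pi) hc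
  rw [show (fun x:ℝ => Complex.exp (Complex.I * (k:ℂ) * (x:ℂ)))
      = fun x:ℝ => Complex.exp ((Complex.I * (k:ℂ)) * (x:ℂ)) from rfl, this]
  have : Complex.exp (Complex.I * (k:ℂ) * (2*Real.pi)) = 1 := by
    rw [show Complex.I * (k:ℂ) * (2*Real.pi) = (k:ℂ) * (2 * Real.pi * Complex.I) by ring]
    exact Complex.exp_int_mul_two_pi_mul_I k
  simp [this]

private lemma expCont (k : ℂ) : Continuous fun x : ℝ => Complex.exp (k * (x:ℂ)) :=
  Complex.continuous_exp.comp (continuous_const.mul Complex.continuous_ofReal)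

private lemma expAnalytic (k : ℂ) :
    AnalyticOnNhd ℝ (fun x : ℝ => Complex.exp (k * (x:ℂ))) Set.univ := by
  intro x _
  have h1 : AnalyticAt ℝ (fun x : ℝ => ((x:ℂ))) x := Complex.ofRealCLM.analyticAt x
  have h2 : AnalyticAt ℝ (fun x : ℝ => k * (x:ℂ)) x := analyticAt_const.mul h1
  exact (analyticAt_cexp.restrictScalars).comp h2

private lemma intOnSub {A : Set ℝ} (hAs : A ⊆ Set.Ico 0 (2 * Real.pi)) {f : ℝ → ℂ}
    (hf : Continuous f) : IntegrableOn f A volume :=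
  (hf.continuousOn.integrableOn_Icc).mono_set (hAs.trans Set.Ico_subset_Icc_self)

private lemma intOnSubR {A : Set ℝ} (hAs : A ⊆ Set.Ico 0 (2 * Real.pi)) {f : ℝ → ℝ}
    (hf : Continuous f) : IntegrableOn f A volume :=
  (hf.continuousOn.integrableOn_Icc).mono_set (hAs.trans Set.Ico_subset_Icc_self)

private lemma keyPos (G : ℝ → ℂ) (hGa : AnalyticOnNhd ℝ G Set.univ)
    (hGr : ∀ x, G x = (((G x).re : ℝ) : ℂ)) (hGnn : ∀ x, 0 ≤ (G x).re)
    (hGne : ∃ x, G x ≠ 0)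
    (A : Set ℝ) (hAm : MeasurableSet A) (hAs : A ⊆ Set.Ico 0 (2 * Real.pi))
    (hA : volume A ≠ 0) :
    0 < ∫ x in A, (G x).re := by
  have hGc : Continuous G := by
    rw [continuous_iff_continuousAt]
    exact fun x => (hGa x trivial).continuousAt
  have hInt : IntegrableOn (fun x => (G x).re) A :=
    intOnSubR hAs (Complex.continuous_re.comp hGc)
  have hnn : 0 ≤ᵐ[volume.restrict A] fun x => (G x).re :=
    Filter.Eventually.of_forall fun x => hGnn x
  rcases (lt_or_eq_of_le (setIntegral_nonneg hAm fun x _ => hGnn x)).symm with h | h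
  · exfalso
    have hps := (setIntegral_pos_iff_support_of_nonneg_ae hnn hInt).not.mp
      (by rw [← h]; exact lt_irrefl 0)
    push_neg at hps
    have hZm : volume (A \ Function.support fun x => (G x).re) ≠ 0 := by
      intro h0
      apply hA
      have hle := measure_union_le (μ := volume)
        ((Function.support fun x => (G x).re) ∩ A) (A \ Function.support fun x => (G x).re)
      have hsub : A ⊆ ((Function.support fun x => (G x).re) ∩ A) ∪
          (A \ Function.support fun x => (G x).re) := by
        intro x hx
        by_cases hxs : x ∈ Function.support fun x => (G x).re
        · exact Or.inl ⟨hxs, hx⟩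
        · exact Or.inr ⟨hx, hxs⟩
      have hfin := le_trans (measure_mono hsub) hle
      rw [le_antisymm hps (zero_le), h0, add_zero] at hfin
      exact le_antisymm hfin (zero_le)
    set Z := A \ Function.support fun x => (G x).re with hZ
    have hZinf : Z.Infinite := by
      intro hfin
      exact hZm (hfin.countable.measure_zero _)
    obtain ⟨x₀, -, hacc⟩ := hZinf.exists_accPt_of_subset_isCompact isCompact_Icc
      (((Set.diff_subset).trans hAs).trans Set.Ico_subset_Icc_self)
    have hfreq : ∃ᶠ z in nhdsWithin x₀ {x₀}ᶜ, G z = 0 := by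
      rw [accPt_iff_frequently] at hacc
      rw [frequently_nhdsWithin_iff]
      refine hacc.mono ?_
      rintro y ⟨hy1, hy2⟩
      refine ⟨?_, hy1⟩
      have hy3 : (G y).re = 0 := by
        by_contra hne
        exact hy2.2 hne
      rw [hGr y, hy3]; simp
    have heq := hGa.eqOn_zero_of_preconnected_of_frequently_eq_zero isPreconnected_univ
      (Set.mem_univ x₀) hfreq
    obtain ⟨x, hx⟩ := hGne
    exact hx (heq (Set.mem_univ x))
  · exact h

theorem stmt18 {H : Type*} [NormedAddCommGroup H] [InnerProductSpace ℂ H] [CompleteSpace H]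
    (e : HilbertBasis ℕ ℂ H) (ξ : ℕ → H) (hξ : ∀ n, ‖ξ n‖ = 1)
    (c : ℕ → ℕ → ℂ) (hc : ∀ n m, c n m = (inner ℂ (ξ n) (ξ m) : ℂ))
    (E : Set ℝ → (H →L[ℂ] H))
    (hE : ∀ X : Set ℝ, MeasurableSet X → X ⊆ Set.Ico 0 (2 * Real.pi) → ∀ n m : ℕ,
      (inner ℂ (e n) (E X (e m)) : ℂ) = c n m * phaseInt X n m)
    (X : Set ℝ) (hXm : MeasurableSet X) (hXs : X ⊆ Set.Ico 0 (2 * Real.pi))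
    (hXne : E X ≠ 0) (hXni : E X ≠ 1)
    (hl : 0 < (volume X).toReal) (hu : (volume X).toReal < 2 * Real.pi)
    (φ : H) (hφ : ‖φ‖ = 1)
    (S : Finset ℕ) (hS : S.Nonempty)
    (hsupp : ∑ n ∈ S, ‖(inner ℂ (e n) φ : ℂ)‖ ^ 2 = 1) :
    0 < (inner ℂ φ (E X φ) : ℂ).re ∧ (inner ℂ φ (E X φ) : ℂ).re < 1 := by
  classical
  have hπ : (0:ℝ) < 2 * Real.pi := by positivity
  set a : ℕ → ℂ := fun n => (inner ℂ (e n) φ : ℂ) with ha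
  -- Parseval
  have hpar : HasSum (fun n => ‖a n‖ ^ 2) 1 := by
    have h1 := e.hasSum_inner_mul_inner φ φ
    have h2 : (inner ℂ φ φ : ℂ) = 1 := by
      rw [inner_self_eq_norm_sq_to_K, hφ]; norm_num
    rw [h2] at h1
    have h3 : (fun n => (inner ℂ φ (e n) : ℂ) * (inner ℂ (e n) φ : ℂ))
        = fun n => ((‖a n‖ ^ 2 : ℝ) : ℂ) := by
      funext n
      have h4 : (inner ℂ φ (e n) : ℂ) = conj (a n) := by
        simp [ha]
      rw [h4, RCLike.conj_mul (a n)]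
      norm_cast
    rw [h3] at h1
    rw [show (1:ℂ) = ((1:ℝ):ℂ) by norm_num] at h1
    exact Complex.hasSum_ofReal.mp h1
  -- coefficients outside S vanish
  have hvan : ∀ m ∉ S, a m = 0 := by
    intro m hm
    have h1 : ∑ n ∈ insert m S, ‖a n‖ ^ 2 ≤ 1 :=
      sum_le_hasSum (insert m S) (fun n _ => by positivity) hpar
    rw [Finset.sum_insert hm, hsupp] at h1
    have h3 : ‖a m‖ = 0 := by nlinarith [norm_nonneg (a m), sq_nonneg ‖a m‖]
    exact norm_eq_zero.mp h3
  -- representation of φ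
  have horth := orthonormal_iff_ite.mp e.orthonormal
  have hrep : φ = ∑ n ∈ S, a n • e n := by
    set ψ := ∑ n ∈ S, a n • e n with hψ
    have hco : ∀ m, (inner ℂ (e m) ψ : ℂ) = if m ∈ S then a m else 0 := by
      intro m
      rw [hψ, inner_sum]
      simp only [inner_smul_right, horth, mul_ite, mul_one, mul_zero]
      simp [Finset.sum_ite_eq]
    have h0 : e.repr (φ - ψ) = 0 := by
      apply lp.ext
      funext m
      rw [e.repr_apply_apply]
      have : (inner ℂ (e m) (φ - ψ) : ℂ) = 0 := by
        rw [inner_sub_right, hco]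
        by_cases hm : m ∈ S
        · simp [hm, ha]
        · simp only [if_neg hm, sub_zero]; exact hvan m hm
      exact this.trans (by simp)
    have := e.repr.injective (by rw [h0, map_zero] : e.repr (φ - ψ) = e.repr 0)
    exact sub_eq_zero.mp this
  -- the trigonometric polynomial
  set G : ℝ → ℂ := fun x => ∑ n ∈ S, ∑ m ∈ S,
      conj (a n) * a m * c n m * Complex.exp (Complex.I * ((n:ℂ) - (m:ℂ)) * (x:ℂ)) with hG
  have hswap : ∀ A : Set ℝ, MeasurableSet A → A ⊆ Set.Ico 0 (2*Real.pi) →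
      (∫ x in A, G x) = ∑ n ∈ S, ∑ m ∈ S, conj (a n) * a m * c n m *
        ∫ x in A, Complex.exp (Complex.I * ((n:ℂ) - (m:ℂ)) * (x:ℂ)) := by
    intro A hAm hAs
    rw [hG]
    rw [integral_finset_sum S (fun n hn => ?_)]
    · refine Finset.sum_congr rfl fun n hn => ?_
      rw [integral_finset_sum S (fun m hm => ?_)]
      · exact Finset.sum_congr rfl fun m hm => integral_const_mul _ _
      · exact (intOnSub hAs (expCont _)).const_mul _
    · exact integrable_finset_sum S fun m hm => (intOnSub hAs (expCont _)).const_mul _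
  -- value of the inner product
  have hEexp : (inner ℂ φ (E X φ) : ℂ)
      = ∑ n ∈ S, ∑ m ∈ S, conj (a n) * a m * (c n m * phaseInt X n m) := by
    conv_lhs => rw [hrep]
    rw [map_sum, sum_inner]
    refine Finset.sum_congr rfl fun n hn => ?_
    rw [inner_smul_left, inner_sum, Finset.mul_sum]
    refine Finset.sum_congr rfl fun m hm => ?_
    rw [_root_.map_smul, inner_smul_right, hE X hXm hXs n m]
    ring
  have hKey : (inner ℂ φ (E X φ) : ℂ) = ((1/(2*Real.pi):ℝ):ℂ) * ∫ x in X, G x := by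
    rw [hEexp, hswap X hXm hXs, Finset.mul_sum]
    refine Finset.sum_congr rfl fun n _ => ?_
    rw [Finset.mul_sum]
    refine Finset.sum_congr rfl fun m _ => ?_
    rw [phaseInt]
    ring
  -- G is a squared norm
  set Fv : ℝ → H := fun x => ∑ m ∈ S, (a m * Complex.exp (-(Complex.I) * (m:ℂ) * (x:ℂ))) • ξ m
    with hFv
  have hGval : ∀ x : ℝ, G x = (inner ℂ (Fv x) (Fv x) : ℂ) := by
    intro x
    rw [hFv]
    simp only [sum_inner]
    rw [hG]
    refine Finset.sum_congr rfl fun n hn => ?_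
    rw [inner_sum]
    refine Finset.sum_congr rfl fun m hm => ?_
    rw [inner_smul_left, inner_smul_right, ← hc n m]
    rw [map_mul]
    rw [← Complex.exp_conj]
    have hconj : conj (-(Complex.I) * (n:ℂ) * (x:ℂ)) = Complex.I * (n:ℂ) * (x:ℂ) := by
      simp [map_mul, Complex.conj_I, Complex.conj_ofReal]
    rw [hconj]
    have hexp : Complex.exp (Complex.I * ((n:ℂ) - (m:ℂ)) * (x:ℂ))
        = Complex.exp (Complex.I * (n:ℂ) * (x:ℂ)) * Complex.exp (-(Complex.I) * (m:ℂ) * (x:ℂ)) := by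
      rw [← Complex.exp_add]
      congr 1
      ring
    rw [hexp]
    ring
  have hGr : ∀ x, G x = (((G x).re : ℝ) : ℂ) := by
    intro x
    rw [hGval x]
    have him := inner_self_im (𝕜 := ℂ) (Fv x)
    simp only [RCLike.im_to_complex] at him
    exact (Complex.re_add_im _).symm.trans (by rw [him]; simp)
  have hGnn : ∀ x, 0 ≤ (G x).re := by
    intro x
    rw [hGval x]
    have := inner_self_nonneg (𝕜 := ℂ) (x := Fv x)
    simpa using this
  -- integral over the full period
  have hIcoInt : (∫ x in Set.Ico (0:ℝ) (2*Real.pi), G x) = ((2*Real.pi:ℝ):ℂ) := by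
    rw [hswap _ measurableSet_Ico subset_rfl]
    have h1 : ∀ n m : ℕ, (∫ x in Set.Ico (0:ℝ) (2*Real.pi),
        Complex.exp (Complex.I * ((n:ℂ) - (m:ℂ)) * (x:ℂ)))
        = if n = m then ((2*Real.pi:ℝ):ℂ) else 0 := by
      intro n m
      by_cases h : n = m
      · subst h
        simp only [sub_self, mul_zero, zero_mul, Complex.exp_zero]
        rw [setIntegral_const, measureReal_def, Real.volume_Ico, sub_zero,
          ENNReal.toReal_ofReal (by positivity : (0:ℝ) ≤ 2*Real.pi)]
        simp [Complex.real_smul]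
      · rw [if_neg h]
        have hk : ((n:ℤ) - m) ≠ 0 := sub_ne_zero.mpr (by exact_mod_cast h)
        have h2 := expIntZero ((n:ℤ) - m) hk
        have h3 : (((n:ℤ) - (m:ℤ) : ℤ) : ℂ) = (n:ℂ) - (m:ℂ) := by push_cast; ring
        rw [h3] at h2
        exact h2
    simp only [h1, mul_ite, mul_zero]
    rw [Finset.sum_congr rfl (fun n hn => Finset.sum_ite_eq S n
      (fun m => conj (a n) * a m * c n m * ((2*Real.pi:ℝ):ℂ)))]
    have h4 : ∀ n ∈ S, (if n ∈ S then conj (a n) * a n * c n n * ((2*Real.pi:ℝ):ℂ) else 0)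
        = ((‖a n‖^2 : ℝ) : ℂ) * ((2*Real.pi:ℝ):ℂ) := by
      intro n hn
      rw [if_pos hn, hc n n]
      rw [inner_self_eq_norm_sq_to_K, hξ n]
      have h5 : conj (a n) * a n = ((‖a n‖^2 : ℝ) : ℂ) := by
        rw [RCLike.conj_mul]; norm_cast
      rw [h5]; norm_num
    rw [Finset.sum_congr rfl h4, ← Finset.sum_mul]
    rw [← Complex.ofReal_sum, hsupp]
    norm_num
  have hGanal : AnalyticOnNhd ℝ G Set.univ := by
    intro x hx
    rw [hG]
    apply Finset.analyticAt_fun_sum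
    intro n hn
    apply Finset.analyticAt_fun_sum
    intro m hm
    exact analyticAt_const.mul (expAnalytic _ x trivial)
  have hGne : ∃ x, G x ≠ 0 := by
    by_contra hcon
    push_neg at hcon
    rw [show G = fun _ => (0:ℂ) from funext hcon] at hIcoInt
    simp only [integral_zero] at hIcoInt
    have : (2*Real.pi:ℝ) = 0 := by exact_mod_cast hIcoInt.symm
    linarith
  -- continuity / integrability of G.re
  have hGc : Continuous G := by
    rw [continuous_iff_continuousAt]
    exact fun x => (hGanal x trivial).continuousAt
  have hIntRe : ∀ A : Set ℝ, A ⊆ Set.Ico 0 (2*Real.pi) →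
      (∫ x in A, G x).re = ∫ x in A, (G x).re := by
    intro A hAs
    have := integral_re (μ := volume.restrict A) (f := G) (intOnSub hAs hGc)
    simpa using this.symm
  -- real part of the inner product
  have hre : (inner ℂ φ (E X φ) : ℂ).re = (1/(2*Real.pi)) * ∫ x in X, (G x).re := by
    rw [hKey, Complex.mul_re]
    simp only [Complex.ofReal_re, Complex.ofReal_im, zero_mul, sub_zero]
    rw [hIntRe X hXs]
  -- measure facts
  have hXvol : volume X ≠ 0 := by
    intro h0; rw [h0] at hl; simp at hl
  set X' := Set.Ico (0:ℝ) (2*Real.pi) \ X with hX'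
  have hX'm : MeasurableSet X' := measurableSet_Ico.diff hXm
  have hX's : X' ⊆ Set.Ico 0 (2*Real.pi) := Set.diff_subset
  have hXfin : volume X ≠ ⊤ := by
    refine ne_top_of_le_ne_top ?_ (measure_mono hXs)
    rw [Real.volume_Ico]
    exact ENNReal.ofReal_ne_top
  have hX'vol : volume X' ≠ 0 := by
    intro h0
    have hdiff : volume X' = volume (Set.Ico (0:ℝ) (2*Real.pi)) - volume X :=
      measure_diff hXs hXm.nullMeasurableSet hXfin
    rw [hdiff] at h0
    have hle : volume (Set.Ico (0:ℝ) (2*Real.pi)) ≤ volume X :=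
      tsub_eq_zero_iff_le.mp h0
    have := ENNReal.toReal_mono hXfin hle
    rw [Real.volume_Ico, sub_zero, ENNReal.toReal_ofReal (by positivity)] at this
    linarith
  have hpos := keyPos G hGanal hGr hGnn hGne X hXm hXs hXvol
  have hpos' := keyPos G hGanal hGr hGnn hGne X' hX'm hX's hX'vol
  have hsplit : (∫ x in X, (G x).re) + (∫ x in X', (G x).re) = 2*Real.pi := by
    have hu2 : (∫ x in X ∪ X', (G x).re) = (∫ x in X, (G x).re) + ∫ x in X', (G x).re :=
      setIntegral_union (by rw [hX']; exact Set.disjoint_sdiff_right) hX'm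
        (intOnSubR hXs (Complex.continuous_re.comp hGc))
        (intOnSubR hX's (Complex.continuous_re.comp hGc))
    have hu3 : X ∪ X' = Set.Ico (0:ℝ) (2*Real.pi) := by
      rw [hX']; exact Set.union_diff_cancel hXs
    rw [← hu2, hu3, ← hIntRe _ subset_rfl, hIcoInt]
    simp
  constructor
  · rw [hre]
    exact mul_pos (by positivity) hpos
  · rw [hre]
    have h6 : (1/(2*Real.pi)) * (2*Real.pi) = 1 := by
      field_simp
    nlinarith [mul_pos (show (0:ℝ) < 1/(2*Real.pi) by positivity) hpos']
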